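/- arXiv:1211.2316 — 4 statements merged into one kernel-verified Lean document; each statement's English description precedes it below -/
import Mathlib

section
/- If W₁ ⊇ W₂ ⊇ W₃ ⊇ … is a decreasing sequence of closed subsets of ℝⁿ, each of which is a nontrivial max cone (closed under componentwise maximum and multiplication by nonnegative scalars, containing a nonzero vector), then the intersection ⋂ᵢ Wᵢ is a closed max cone containing a nonzero vector. -/
open scoped NNReal

/-- A max cone in `(ℝ≥0)ⁿ`: contains `0`, closed under componentwise maximum
and under multiplication by nonnegative scalars. -/
def MaxCone {n : ℕ} (W : Set (Fin n → ℝ≥0)) : Prop :=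
  (0 : Fin n → ℝ≥0) ∈ W ∧
  (∀ x ∈ W, ∀ y ∈ W, x ⊔ y ∈ W) ∧
  (∀ r : ℝ≥0, ∀ x ∈ W, r • x ∈ W)

theorem stmt0 {n : ℕ} (W : ℕ → Set (Fin n → ℝ≥0))
    (hclosed : ∀ i, IsClosed (W i))
    (hcone : ∀ i, MaxCone (W i))
    (hnontriv : ∀ i, ∃ x ∈ W i, x ≠ 0)
    (hdec : ∀ i, W (i + 1) ⊆ W i) :
    IsClosed (⋂ i, W i) ∧ MaxCone (⋂ i, W i) ∧ ∃ x ∈ ⋂ i, W i, x ≠ 0 := by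
  have hIC : IsClosed (⋂ i, W i) := isClosed_iInter hclosed
  refine ⟨hIC, ⟨?_, ?_, ?_⟩, ?_⟩
  · exact Set.mem_iInter.2 fun i => (hcone i).1
  · intro x hx y hy
    exact Set.mem_iInter.2 fun i =>
      (hcone i).2.1 x (Set.mem_iInter.1 hx i) y (Set.mem_iInter.1 hy i)
  · intro r x hx
    exact Set.mem_iInter.2 fun i => (hcone i).2.2 r x (Set.mem_iInter.1 hx i)
  · -- nontriviality via compactness
    set g : (Fin n → ℝ≥0) → ℝ≥0 := fun x => Finset.univ.sup x with hg
    have hgcont : Continuous g := by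
      have h : Continuous (Finset.univ.sup (fun i (x : Fin n → ℝ≥0) => x i)) :=
        Continuous.finset_sup fun i _ => continuous_apply i
      convert h using 1
      funext x
      simp [hg, Finset.sup_apply]
    have hgmul : ∀ (r : ℝ≥0) (x : Fin n → ℝ≥0), g (r • x) = r * g x := by
      intro r x
      simp only [hg]
      rw [NNReal.mul_finset_sup]
      rfl
    have hgzero : ∀ x : Fin n → ℝ≥0, x ≠ 0 → g x ≠ 0 := by
      intro x hx h0
      apply hx
      funext i
      have := (Finset.sup_eq_bot_iff _ _).1 h0 i (Finset.mem_univ i)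
      simpa using this
    set K : ℕ → Set (Fin n → ℝ≥0) := fun i => W i ∩ g ⁻¹' {1} with hK
    have hKclosed : ∀ i, IsClosed (K i) :=
      fun i => (hclosed i).inter (isClosed_singleton.preimage hgcont)
    have hKne : ∀ i, (K i).Nonempty := by
      intro i
      obtain ⟨x, hxW, hx0⟩ := hnontriv i
      refine ⟨(g x)⁻¹ • x, (hcone i).2.2 _ x hxW, ?_⟩
      simp only [Set.mem_preimage, Set.mem_singleton_iff, hgmul]
      exact inv_mul_cancel₀ (hgzero x hx0)
    have hKsub : ∀ i, K i ⊆ Set.Icc (0 : Fin n → ℝ≥0) 1 := by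
      intro i x hx
      refine ⟨fun j => zero_le, fun j => ?_⟩
      have : x j ≤ g x := Finset.le_sup (Finset.mem_univ j)
      rw [hx.2] at this
      exact this
    have hKcompact : ∀ i, IsCompact (K i) := fun i =>
      IsCompact.of_isClosed_subset isCompact_Icc (hKclosed i) (hKsub i)
    have hKdec : ∀ i, K (i + 1) ⊆ K i := fun i =>
      Set.inter_subset_inter_left _ (hdec i)
    obtain ⟨x, hx⟩ := IsCompact.nonempty_iInter_of_sequence_nonempty_isCompact_isClosed
      K hKdec hKne (hKcompact 0) hKclosed
    refine ⟨x, Set.mem_iInter.2 fun i => (Set.mem_iInter.1 hx i).1, ?_⟩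
    intro h0
    have := (Set.mem_iInter.1 hx 0).2
    rw [h0] at this
    simp only [Set.mem_preimage, Set.mem_singleton_iff] at this
    have h00 : g (0 : Fin n → ℝ≥0) = 0 := by
      simp [hg]
    rw [h00] at this
    exact one_ne_zero this.symm
end

section
/- Let A ∈ (ℝ≥0)^{n×n}, v ∈ (ℝ≥0)ⁿ, and t ≥ 1. If A^{⊗t} ⊗ v ≠ 0, then [v : A ⊗ v]^t ≤ [v : A^{⊗t} ⊗ v], where A^{⊗t} denotes the t-fold max-times matrix power and [x:y] = max{λ : λ·y ≤ x}. -/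
set_option synthInstance.maxHeartbeats 1000000
set_option maxHeartbeats 1000000


open scoped NNReal

def maxMul {n : ℕ} (A : Matrix (Fin n) (Fin n) ℝ≥0) (v : Fin n → ℝ≥0) : Fin n → ℝ≥0 :=
  fun i => Finset.univ.sup fun j => A i j * v j

def maxMatMul {n : ℕ} (A B : Matrix (Fin n) (Fin n) ℝ≥0) : Matrix (Fin n) (Fin n) ℝ≥0 :=
  fun i j => Finset.univ.sup fun k => A i k * B k j

def maxPow {n : ℕ} (A : Matrix (Fin n) (Fin n) ℝ≥0) : ℕ → Matrix (Fin n) (Fin n) ℝ≥0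
  | 0 => 1
  | (t + 1) => maxMatMul A (maxPow A t)

noncomputable def bracket {n : ℕ} (v w : Fin n → ℝ≥0) : ℝ≥0 :=
  sSup {l : ℝ≥0 | l • w ≤ v}

lemma maxMul_mono {n : ℕ} (A : Matrix (Fin n) (Fin n) ℝ≥0) {v w : Fin n → ℝ≥0}
    (h : v ≤ w) : maxMul A v ≤ maxMul A w := fun i =>
  Finset.sup_mono_fun fun j _ => mul_le_mul_right (h j) _

lemma maxMul_smul {n : ℕ} (A : Matrix (Fin n) (Fin n) ℝ≥0) (c : ℝ≥0) (v : Fin n → ℝ≥0) :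
    maxMul A (c • v) = c • maxMul A v := by
  funext i
  show (Finset.univ.sup fun j => A i j * (c * v j)) = c * Finset.univ.sup fun j => A i j * v j
  rw [NNReal.mul_finset_sup]
  exact Finset.sup_congr rfl fun j _ => by ring

lemma maxMul_maxMatMul {n : ℕ} (A B : Matrix (Fin n) (Fin n) ℝ≥0) (v : Fin n → ℝ≥0) :
    maxMul (maxMatMul A B) v = maxMul A (maxMul B v) := by
  funext i
  show (Finset.univ.sup fun j => (Finset.univ.sup fun k => A i k * B k j) * v j)
      = Finset.univ.sup fun k => A i k * Finset.univ.sup fun j => B k j * v j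
  simp only [NNReal.finset_sup_mul, NNReal.mul_finset_sup]
  rw [Finset.sup_comm]
  exact Finset.sup_congr rfl fun k _ => Finset.sup_congr rfl fun j _ => by ring

lemma maxMul_one {n : ℕ} (v : Fin n → ℝ≥0) : maxMul 1 v = v := by
  funext i
  apply le_antisymm
  · apply Finset.sup_le
    intro j _
    rcases eq_or_ne i j with rfl | h
    · simp [maxMul, Matrix.one_apply]
    · simp [Matrix.one_apply, h]
  · have := Finset.le_sup (f := fun j => (1 : Matrix (Fin n) (Fin n) ℝ≥0) i j * v j)
      (Finset.mem_univ i)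
    simpa [maxMul, Matrix.one_apply] using this

lemma bracket_smul_le {n : ℕ} (v w : Fin n → ℝ≥0) : bracket v w • w ≤ v := by
  intro i
  show bracket v w * w i ≤ v i
  rcases eq_or_ne (w i) 0 with h | h
  · simp [h]
  · rw [← le_div_iff₀ (h.bot_lt)]
    apply csSup_le ⟨0, by simp⟩
    intro l hl
    rw [le_div_iff₀ (h.bot_lt)]
    exact hl i

lemma le_bracket {n : ℕ} {v w : Fin n → ℝ≥0} (hw : w ≠ 0) {l : ℝ≥0} (hl : l • w ≤ v) :
    l ≤ bracket v w := by
  obtain ⟨i, hi⟩ : ∃ i, w i ≠ 0 := by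
    by_contra h
    push_neg at h
    exact hw (funext h)
  unfold bracket
  refine le_csSup ⟨v i / w i, fun m hm => ?_⟩ hl
  rw [le_div_iff₀ (hi.bot_lt)]
  exact hm i

lemma iter_key {n : ℕ} (A : Matrix (Fin n) (Fin n) ℝ≥0) (v : Fin n → ℝ≥0) (t : ℕ) :
    bracket v (maxMul A v) ^ t • maxMul (maxPow A t) v ≤ v := by
  induction t with
  | zero => simp [maxPow, maxMul_one]
  | succ t ih =>
    set l := bracket v (maxMul A v) with hl
    calc l ^ (t + 1) • maxMul (maxPow A (t + 1)) v
        = l • maxMul A (l ^ t • maxMul (maxPow A t) v) := by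
          rw [maxMul_smul, maxPow, maxMul_maxMatMul, smul_smul, pow_succ, mul_comm]
      _ ≤ l • maxMul A v := smul_le_smul_of_nonneg_left (maxMul_mono A ih) zero_le
      _ ≤ v := bracket_smul_le v (maxMul A v)

theorem stmt8 {n : ℕ} (A : Matrix (Fin n) (Fin n) ℝ≥0) (v : Fin n → ℝ≥0)
    (t : ℕ) (ht : 1 ≤ t) (hne : maxMul (maxPow A t) v ≠ 0) :
    bracket v (maxMul A v) ^ t ≤ bracket v (maxMul (maxPow A t) v) := by
  exact le_bracket hne (iter_key A v t)
end

section
/- Let W ⊆ (ℝ≥0)ⁿ be a closed max cone containing a nonzero vector, invariant under the max-times multiplication by A ∈ (ℝ≥0)^{n×n}. Then there exist a nonzero u ∈ W and λ ∈ ℝ≥0 with A ⊗ u = λ·u. -/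
set_option maxHeartbeats 1000000
set_option synthInstance.maxHeartbeats 400000

open scoped NNReal

namespace Stmt12Aux

open Finset Filter Topology

variable {n : ℕ} {A : Matrix (Fin n) (Fin n) ℝ≥0} {W : Set (Fin n → ℝ≥0)}

lemma maxMul_mono {v w : Fin n → ℝ≥0} (h : v ≤ w) : maxMul A v ≤ maxMul A w := by
  intro i
  exact Finset.sup_mono_fun fun j _ => mul_le_mul_right (h j) _

lemma maxMul_smul (r : ℝ≥0) (v : Fin n → ℝ≥0) : maxMul A (r • v) = r • maxMul A v := by
  funext i
  simp only [maxMul, Pi.smul_apply, smul_eq_mul, NNReal.mul_finset_sup]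
  congr 1; funext j; ring

lemma maxMul_matrix_smul (r : ℝ≥0) (v : Fin n → ℝ≥0) :
    maxMul (r • A) v = r • maxMul A v := by
  funext i
  simp only [maxMul, Matrix.smul_apply, Pi.smul_apply, smul_eq_mul, NNReal.mul_finset_sup]
  congr 1; funext j; ring

lemma maxMul_sup (v w : Fin n → ℝ≥0) : maxMul A (v ⊔ w) = maxMul A v ⊔ maxMul A w := by
  funext i
  simp only [maxMul, Pi.sup_apply]
  rw [← Finset.sup_sup]
  congr 1; funext j
  exact mul_max_of_nonneg _ _ zero_le

lemma maxMul_zero : maxMul A (0 : Fin n → ℝ≥0) = 0 := by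
  funext i; simp [maxMul]

lemma continuous_finset_sup {ι X : Type*} [TopologicalSpace X] (s : Finset ι)
    (f : ι → X → ℝ≥0) (h : ∀ i, Continuous (f i)) :
    Continuous fun x => s.sup (fun i => f i x) := by
  classical
  induction s using Finset.cons_induction with
  | empty => simpa using continuous_const
  | cons a s ha ih =>
      simp only [Finset.sup_cons]
      exact (h a).max ih

lemma continuous_maxMul : Continuous (maxMul A) := by
  apply continuous_pi
  intro i
  exact continuous_finset_sup _ _ fun j => continuous_const.mul (continuous_apply j)

lemma continuous_nrm : Continuous (fun v : Fin n → ℝ≥0 => Finset.univ.sup v) :=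
  continuous_finset_sup _ _ fun j => continuous_apply j

lemma cone_sup_mem {ι : Type*} (hW : MaxCone W) (s : Finset ι) (f : ι → (Fin n → ℝ≥0))
    (hf : ∀ i ∈ s, f i ∈ W) : s.sup f ∈ W := by
  classical
  induction s using Finset.cons_induction with
  | empty => exact hW.1
  | cons a s ha ih =>
      rw [Finset.sup_cons]
      exact hW.2.1 _ (hf a (Finset.mem_cons_self a s)) _
        (ih fun i hi => hf i (Finset.mem_cons_of_mem hi))

lemma nrm_smul (r : ℝ≥0) (v : Fin n → ℝ≥0) :
    Finset.univ.sup (r • v) = r * Finset.univ.sup v := by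
  rw [NNReal.mul_finset_sup]; rfl

lemma nrm_mono {v w : Fin n → ℝ≥0} (h : v ≤ w) :
    Finset.univ.sup v ≤ Finset.univ.sup w :=
  Finset.sup_mono_fun fun i _ => h i

lemma nrm_ne_zero {v : Fin n → ℝ≥0} (h : v ≠ 0) : Finset.univ.sup v ≠ 0 := by
  obtain ⟨i, hi⟩ := Function.ne_iff.mp h
  intro h0
  apply hi
  have := Finset.le_sup (f := v) (Finset.mem_univ i)
  rw [h0] at this
  exact le_antisymm this zero_le

lemma nrm_zero : Finset.univ.sup (0 : Fin n → ℝ≥0) = 0 :=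
  le_antisymm (Finset.sup_le fun _ _ => le_rfl) zero_le

lemma ne_zero_of_nrm_one {v : Fin n → ℝ≥0} (h : Finset.univ.sup v = 1) : v ≠ 0 := by
  intro h0; rw [h0, nrm_zero] at h; exact one_ne_zero h.symm

lemma smul_sup' (r : ℝ≥0) (v w : Fin n → ℝ≥0) : r • (v ⊔ w) = r • v ⊔ r • w := by
  funext i
  simp only [Pi.smul_apply, Pi.sup_apply, smul_eq_mul]
  exact mul_max_of_nonneg _ _ zero_le

lemma smul_le_smul' (r : ℝ≥0) {v w : Fin n → ℝ≥0} (h : v ≤ w) : r • v ≤ r • w :=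
  fun i => mul_le_mul_right (h i) r

lemma smul_cancel {lam : ℝ≥0} {x y : Fin n → ℝ≥0} (hlam : lam ≠ 0)
    (h : lam • x ≤ lam • y) : x ≤ y := by
  intro i
  have := h i
  simp only [Pi.smul_apply, smul_eq_mul] at this
  have h2 := mul_le_mul_right this lam⁻¹
  rwa [← mul_assoc, ← mul_assoc, inv_mul_cancel₀ hlam, one_mul, one_mul] at h2

lemma iter_mem (hW : MaxCone W) {B : Matrix (Fin n) (Fin n) ℝ≥0}
    (hinv : ∀ v ∈ W, maxMul B v ∈ W) (k : ℕ) {v : Fin n → ℝ≥0} (hv : v ∈ W) :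
    (maxMul B)^[k] v ∈ W := by
  induction k with
  | zero => simpa using hv
  | succ k ih => rw [Function.iterate_succ_apply']; exact hinv _ ih

lemma iter_mono {B : Matrix (Fin n) (Fin n) ℝ≥0} (k : ℕ) {v w : Fin n → ℝ≥0}
    (h : v ≤ w) : (maxMul B)^[k] v ≤ (maxMul B)^[k] w := by
  induction k with
  | zero => simpa using h
  | succ k ih =>
      rw [Function.iterate_succ_apply', Function.iterate_succ_apply']
      exact maxMul_mono ih

lemma iter_smul {B : Matrix (Fin n) (Fin n) ℝ≥0} (k : ℕ) (r : ℝ≥0) (v : Fin n → ℝ≥0) :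
    (maxMul B)^[k] (r • v) = r • (maxMul B)^[k] v := by
  induction k with
  | zero => simp
  | succ k ih =>
      rw [Function.iterate_succ_apply', Function.iterate_succ_apply', ih, maxMul_smul]

/-- restriction of an invariant closed max cone to coordinates in `T`. -/
lemma restricted_props (A : Matrix (Fin n) (Fin n) ℝ≥0) (hW : MaxCone W) (hcl : IsClosed W)
    (hinv : ∀ v ∈ W, maxMul A v ∈ W) (T : Finset (Fin n))
    (hedge : ∀ i, i ∉ T → ∀ j, j ∈ T → A i j = 0) :
    MaxCone (W ∩ {v | ∀ i, i ∉ T → v i = 0}) ∧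
    IsClosed (W ∩ {v | ∀ i, i ∉ T → v i = 0}) ∧
    (∀ v ∈ (W ∩ {v | ∀ i, i ∉ T → v i = 0}), maxMul A v ∈ (W ∩ {v | ∀ i, i ∉ T → v i = 0})) := by
  classical
  refine ⟨⟨⟨hW.1, fun i _ => rfl⟩, ?_, ?_⟩, ?_, ?_⟩
  · rintro x ⟨hxW, hx0⟩ y ⟨hyW, hy0⟩
    refine ⟨hW.2.1 x hxW y hyW, fun i hi => ?_⟩
    simp [Pi.sup_apply, hx0 i hi, hy0 i hi]
  · rintro r x ⟨hxW, hx0⟩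
    refine ⟨hW.2.2 r x hxW, fun i hi => ?_⟩
    simp [Pi.smul_apply, hx0 i hi]
  · apply hcl.inter
    have : {v : Fin n → ℝ≥0 | ∀ i, i ∉ T → v i = 0} = ⋂ i, {v | i ∉ T → v i = 0} := by
      ext v; simp [Set.mem_iInter]
    rw [this]
    apply isClosed_iInter
    intro i
    by_cases hi : i ∈ T
    · have : {v : Fin n → ℝ≥0 | i ∉ T → v i = 0} = Set.univ := by
        ext v; simp [hi]
      rw [this]; exact isClosed_univ
    · simp only [hi, not_false_eq_true, true_implies]
      exact isClosed_singleton.preimage (continuous_apply i)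
  · rintro v ⟨hvW, hv0⟩
    refine ⟨hinv v hvW, fun i hi => ?_⟩
    refine le_antisymm (Finset.sup_le fun j _ => ?_) zero_le
    by_cases hj : j ∈ T
    · rw [hedge i hi j hj, zero_mul]
    · rw [hv0 j hj, mul_zero]


lemma mainLemma (A : Matrix (Fin n) (Fin n) ℝ≥0) :
    ∀ (S : Finset (Fin n)) (W : Set (Fin n → ℝ≥0)), MaxCone W → IsClosed W →
    (∃ w ∈ W, w ≠ 0) → (∀ v ∈ W, maxMul A v ∈ W) →
    (∀ w ∈ W, ∀ i, i ∉ S → w i = 0) →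
    ∃ u ∈ W, u ≠ 0 ∧ ∃ lam : ℝ≥0, maxMul A u = lam • u := by
  classical
  intro S
  induction S using Finset.strongInduction with
  | _ S IH =>
  intro W hW hcl hnz hinv hsupp
  obtain ⟨w0, hw0W, hw0ne⟩ := hnz
  -- the support of W
  set S₀ : Finset (Fin n) := Finset.univ.filter (fun i => ∃ w ∈ W, w i ≠ 0) with hS₀def
  have hsupp₀ : ∀ w ∈ W, ∀ i, i ∉ S₀ → w i = 0 := by
    intro w hw i hi
    by_contra h
    exact hi (Finset.mem_filter.mpr ⟨Finset.mem_univ _, ⟨w, hw, h⟩⟩)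
  have hS₀sub : S₀ ⊆ S := by
    intro i hi
    obtain ⟨w, hwW, hwi⟩ := (Finset.mem_filter.mp hi).2
    by_contra h
    exact hwi (hsupp w hwW i h)
  -- a member with full support
  have hex : ∀ i : Fin n, ∃ w, w ∈ W ∧ (i ∈ S₀ → w i ≠ 0) := by
    intro i
    by_cases h : ∃ w ∈ W, w i ≠ 0
    · obtain ⟨w, hwW, hwi⟩ := h
      exact ⟨w, hwW, fun _ => hwi⟩
    · exact ⟨0, hW.1, fun hi => absurd (Finset.mem_filter.mp hi).2 h⟩
  choose g hgW hgne using hex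
  set what : Fin n → ℝ≥0 := Finset.univ.sup g with hwhatdef
  have hwhatW : what ∈ W := cone_sup_mem hW _ _ fun i _ => hgW i
  have hwhat_pos : ∀ i ∈ S₀, what i ≠ 0 := by
    intro i hi h0
    apply hgne i hi
    have := Finset.le_sup (f := g) (Finset.mem_univ i) i
    rw [hwhatdef] at h0
    rw [h0] at this
    exact le_antisymm this zero_le
  have hwhat_zero : ∀ i, i ∉ S₀ → what i = 0 := hsupp₀ what hwhatW
  -- S₀ is nonempty
  obtain ⟨i0, hi0⟩ : ∃ i, w0 i ≠ 0 := Function.ne_iff.mp hw0ne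
  have hi0S₀ : i0 ∈ S₀ := Finset.mem_filter.mpr ⟨Finset.mem_univ _, ⟨w0, hw0W, hi0⟩⟩
  have hS₀ne : S₀.Nonempty := ⟨i0, hi0S₀⟩
  have hwhatne : what ≠ 0 := Function.ne_iff.mpr ⟨i0, hwhat_pos i0 hi0S₀⟩
  -- if the support is strictly smaller than S, recurse
  by_cases hS₀S : S₀ = S
  swap
  · exact IH S₀ (HasSubset.Subset.ssubset_of_ne hS₀sub hS₀S) W hW hcl ⟨w0, hw0W, hw0ne⟩ hinv hsupp₀
  -- compact sets
  have hcube : IsCompact {v : Fin n → ℝ≥0 | ∀ i, v i ≤ 1} := by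
    have : {v : Fin n → ℝ≥0 | ∀ i, v i ≤ 1} = Set.univ.pi (fun _ : Fin n => Set.Icc 0 1) := by
      ext v
      simp only [Set.mem_setOf_eq, Set.mem_univ_pi, Set.mem_Icc]
      exact ⟨fun h i => ⟨zero_le, h i⟩, fun h i => (h i).2⟩
    rw [this]
    exact isCompact_univ_pi fun i => isCompact_Icc
  set K : Set (Fin n → ℝ≥0) := W ∩ {v | Finset.univ.sup v = 1} with hKdef
  have hKclosed : IsClosed K := by
    apply hcl.inter
    have : {v : Fin n → ℝ≥0 | Finset.univ.sup v = 1} =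
        (fun v : Fin n → ℝ≥0 => Finset.univ.sup v) ⁻¹' {1} := rfl
    rw [this]
    exact isClosed_singleton.preimage continuous_nrm
  have hKcube : K ⊆ {v | ∀ i, v i ≤ 1} := by
    rintro v ⟨_, hv1⟩ i
    calc v i ≤ Finset.univ.sup v := Finset.le_sup (Finset.mem_univ i)
    _ = 1 := hv1
  have hKcomp : IsCompact K := hcube.of_isClosed_subset hKclosed hKcube
  -- the eigen-inequality compact set
  set Ab : ℝ≥0 := Finset.univ.sup (fun i => Finset.univ.sup (fun j => A i j)) with hAbdef
  set K' : Set (ℝ≥0 × (Fin n → ℝ≥0)) :=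
    {p | p.2 ∈ K ∧ p.1 • p.2 ≤ maxMul A p.2} with hK'def
  have hK'closed : IsClosed K' := by
    have heq : K' = (Prod.snd ⁻¹' K) ∩
        ⋂ i : Fin n, {p : ℝ≥0 × (Fin n → ℝ≥0) | p.1 * p.2 i ≤ maxMul A p.2 i} := by
      ext p
      constructor
      · rintro ⟨h1, h2⟩
        refine ⟨h1, Set.mem_iInter.mpr fun i => ?_⟩
        simpa using h2 i
      · rintro ⟨h1, h2⟩
        refine ⟨h1, fun i => ?_⟩
        simpa using Set.mem_iInter.mp h2 i
    rw [heq]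
    refine (hKclosed.preimage continuous_snd).inter (isClosed_iInter fun i => ?_)
    exact isClosed_le (continuous_fst.mul ((continuous_apply i).comp continuous_snd))
      ((continuous_apply i).comp (continuous_maxMul.comp continuous_snd))
  haveI : Nonempty (Fin n) := ⟨i0⟩
  have hK'sub : K' ⊆ (Set.Iic Ab) ×ˢ {v | ∀ i, v i ≤ 1} := by
    rintro ⟨mu, v⟩ ⟨hvK, hE⟩
    have hv1 : ∀ j, v j ≤ 1 := hKcube hvK
    refine Set.mem_prod.mpr ⟨?_, hv1⟩
    obtain ⟨i, -, hieq⟩ := Finset.exists_mem_eq_sup Finset.univ Finset.univ_nonempty v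
    have hvi : v i = 1 := by rw [← hieq]; exact hvK.2
    have h1 : mu ≤ maxMul A v i := by
      have := hE i
      simp only [Pi.smul_apply, smul_eq_mul] at this
      rwa [hvi, mul_one] at this
    have h2 : maxMul A v i ≤ Ab := by
      refine Finset.sup_le fun j _ => ?_
      calc A i j * v j ≤ A i j * 1 := mul_le_mul_right (hv1 j) _
      _ = A i j := mul_one _
      _ ≤ Finset.univ.sup (fun j => A i j) := Finset.le_sup (Finset.mem_univ j)
      _ ≤ Ab := Finset.le_sup (f := fun i => Finset.univ.sup (fun j => A i j)) (Finset.mem_univ i)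
    exact Set.mem_Iic.mpr (h1.trans h2)
  have hK'comp : IsCompact K' := by
    refine IsCompact.of_isClosed_subset ?_ hK'closed hK'sub
    refine IsCompact.prod ?_ hcube
    have : Set.Iic Ab = Set.Icc 0 Ab := by ext x; simp
    rw [this]; exact isCompact_Icc
  -- normalized what
  set Nw : ℝ≥0 := Finset.univ.sup what with hNwdef
  have hNwne : Nw ≠ 0 := nrm_ne_zero hwhatne
  set whatn : Fin n → ℝ≥0 := Nw⁻¹ • what with hwhatndef
  have hwhatnK : whatn ∈ K := by
    refine ⟨hW.2.2 _ _ hwhatW, ?_⟩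
    show Finset.univ.sup (Nw⁻¹ • what) = 1
    rw [nrm_smul, ← hNwdef, inv_mul_cancel₀ hNwne]
  have hK'ne : K'.Nonempty := ⟨(0, whatn), hwhatnK, by simp⟩
  -- maximize the first coordinate
  obtain ⟨⟨lam, vstar⟩, hmem, hmax⟩ :=
    hK'comp.exists_isMaxOn hK'ne continuous_fst.continuousOn
  obtain ⟨⟨hvW, hvN⟩, hvE⟩ := hmem
  have hvle1 : ∀ i, vstar i ≤ 1 := fun i => by
    calc vstar i ≤ Finset.univ.sup vstar := Finset.le_sup (Finset.mem_univ i)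
    _ = 1 := hvN
  have hvne : vstar ≠ 0 := ne_zero_of_nrm_one hvN
  by_cases hlam : lam = 0
  · -- zero maximal eigenvalue case
    by_cases hAw : maxMul A what = 0
    · exact ⟨what, hwhatW, hwhatne, 0, by rw [hAw, zero_smul]⟩
    · set S₁ : Finset (Fin n) := Finset.univ.filter (fun i => maxMul A what i ≠ 0) with hS₁def
      have hS₁zero : ∀ i, i ∉ S₁ → maxMul A what i = 0 := by
        intro i hi
        by_contra h
        exact hi (Finset.mem_filter.mpr ⟨Finset.mem_univ _, h⟩)
      have hS₁sub : S₁ ⊆ S₀ := by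
        intro i hi
        by_contra h
        exact (Finset.mem_filter.mp hi).2 (hsupp₀ _ (hinv what hwhatW) i h)
      by_cases hS₁S₀ : S₁ = S₀
      · -- contradiction with maximality of lam = 0
        exfalso
        set ep : ℝ≥0 := S₀.inf' hS₀ne (maxMul A what) with hepdef
        have hep : ep ≠ 0 := by
          have hpos : 0 < ep := by
            rw [hepdef]
            refine (Finset.lt_inf'_iff hS₀ne).mpr fun i hi => ?_
            rw [← hS₁S₀] at hi
            exact pos_iff_ne_zero.mpr (Finset.mem_filter.mp hi).2
          exact hpos.ne'
        have key : ∀ i, ep * Nw⁻¹ * what i ≤ maxMul A what i := by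
          intro i
          by_cases hi : i ∈ S₀
          · calc ep * Nw⁻¹ * what i ≤ ep * Nw⁻¹ * Nw :=
                mul_le_mul_right (Finset.le_sup (Finset.mem_univ i)) _
            _ = ep * (Nw⁻¹ * Nw) := mul_assoc _ _ _
            _ = ep := by rw [inv_mul_cancel₀ hNwne, mul_one]
            _ ≤ maxMul A what i := Finset.inf'_le _ hi
          · rw [hwhat_zero i hi, mul_zero]
            exact zero_le
        have hpair : (ep * Nw⁻¹, whatn) ∈ K' := by
          refine ⟨hwhatnK, fun i => ?_⟩
          show (ep * Nw⁻¹) • whatn i ≤ maxMul A whatn i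
          rw [hwhatndef, maxMul_smul]
          simp only [Pi.smul_apply, smul_eq_mul]
          calc ep * Nw⁻¹ * (Nw⁻¹ * what i) = Nw⁻¹ * (ep * Nw⁻¹ * what i) := by ring
          _ ≤ Nw⁻¹ * maxMul A what i := mul_le_mul_right (key i) _
        have hle : ep * Nw⁻¹ ≤ lam := hmax hpair
        rw [hlam] at hle
        exact (mul_ne_zero hep (inv_ne_zero hNwne)) (le_antisymm hle zero_le)
      · -- recurse to the support of `maxMul A what`
        have hssub : S₁ ⊂ S := hS₀S ▸ (HasSubset.Subset.ssubset_of_ne hS₁sub hS₁S₀)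
        have hedge : ∀ i, i ∉ S₁ → ∀ j, j ∈ S₁ → A i j = 0 := by
          intro i hi j hj
          have h0 : maxMul A what i = 0 := hS₁zero i hi
          have hterm : A i j * what j = 0 := by
            refine le_antisymm ?_ zero_le
            calc A i j * what j ≤ maxMul A what i :=
              Finset.le_sup (f := fun j => A i j * what j) (Finset.mem_univ j)
            _ = 0 := h0
          rcases mul_eq_zero.mp hterm with h | h
          · exact h
          · exact absurd h (hwhat_pos j (hS₁sub hj))
        obtain ⟨hW₁, hcl₁, hinv₁⟩ := restricted_props A hW hcl hinv S₁ hedge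
        have hnz₁ : ∃ w ∈ W ∩ {v | ∀ i, i ∉ S₁ → v i = 0}, w ≠ 0 :=
          ⟨maxMul A what, ⟨hinv what hwhatW, hS₁zero⟩, hAw⟩
        obtain ⟨u, ⟨huW, -⟩, hune, lam', heq⟩ :=
          IH S₁ hssub _ hW₁ hcl₁ hnz₁ hinv₁ (fun w hw => hw.2)
        exact ⟨u, huW, hune, lam', heq⟩
  · -- positive maximal eigenvalue case
    set B : Matrix (Fin n) (Fin n) ℝ≥0 := lam⁻¹ • A with hBdef
    have hAB : ∀ v, maxMul A v = lam • maxMul B v := by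
      intro v
      rw [hBdef, maxMul_matrix_smul, smul_smul, mul_inv_cancel₀ hlam, one_smul]
    have hBinvW : ∀ v ∈ W, maxMul B v ∈ W := by
      intro v hv
      rw [hBdef, maxMul_matrix_smul]
      exact hW.2.2 _ _ (hinv v hv)
    have hBvstar : vstar ≤ maxMul B vstar := by
      apply smul_cancel hlam
      rw [← hAB vstar]
      exact hvE
    set u : ℕ → (Fin n → ℝ≥0) := fun k => (maxMul B)^[k] vstar with hudef
    have hu0 : u 0 = vstar := rfl
    have husucc : ∀ k, u (k+1) = maxMul B (u k) := fun k => Function.iterate_succ_apply' _ _ _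
    have huW : ∀ k, u k ∈ W := fun k => iter_mem hW hBinvW k hvW
    have hustep : ∀ k, u k ≤ u (k+1) := by
      intro k
      induction k with
      | zero => rw [husucc 0, hu0]; exact hBvstar
      | succ k ih =>
          have h5 := maxMul_mono (A := B) ih
          rw [← husucc k] at h5
          rw [husucc (k+1)]
          exact h5
    have humono : Monotone u := monotone_nat_of_le_succ hustep
    have huvstar : ∀ k, vstar ≤ u k := fun k => hu0 ▸ humono (Nat.zero_le k)
    by_cases hbd : ∀ i, BddAbove (Set.range fun k => u k i)
    · -- bounded orbit: pass to the limit
      set ulim : Fin n → ℝ≥0 := fun i => ⨆ k, u k i with hulimdef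
      have htend : Tendsto u atTop (𝓝 ulim) := by
        rw [tendsto_pi_nhds]
        intro i
        exact tendsto_atTop_ciSup (fun a b hab => humono hab i) (hbd i)
      have hulimW : ulim ∈ W := hcl.mem_of_tendsto htend (Filter.Eventually.of_forall huW)
      have hfix : maxMul B ulim = ulim := by
        have h1 : Tendsto (fun k => maxMul B (u k)) atTop (𝓝 (maxMul B ulim)) :=
          (continuous_maxMul.tendsto ulim).comp htend
        have h2 : Tendsto (fun k => maxMul B (u k)) atTop (𝓝 ulim) := by
          have h3 := htend.comp (tendsto_add_atTop_nat 1)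
          have h4 : (u ∘ fun k => k + 1) = fun k => maxMul B (u k) := by
            funext k; exact husucc k
          rwa [h4] at h3
        exact tendsto_nhds_unique h1 h2
      have hvle : vstar ≤ ulim := fun i => le_ciSup (hbd i) 0
      have hune : ulim ≠ 0 := by
        intro h0
        rw [h0] at hvle
        exact hvne (le_antisymm hvle zero_le)
      exact ⟨ulim, hulimW, hune, lam, by rw [hAB ulim, hfix]⟩
    · -- unbounded orbit
      push_neg at hbd
      obtain ⟨iT, hiT⟩ := hbd
      set T : Finset (Fin n) := Finset.univ.filter
        (fun i => ¬ BddAbove (Set.range fun k => u k i)) with hTdef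
      have hTmem : ∀ i, i ∈ T ↔ ¬ BddAbove (Set.range fun k => u k i) := by
        intro i; simp [hTdef]
      have hiTT : iT ∈ T := (hTmem iT).mpr hiT
      have hTsub : T ⊆ S₀ := by
        intro i hi
        by_contra h
        exact (hTmem i).mp hi ⟨0, by rintro x ⟨k, rfl⟩; exact (hsupp₀ _ (huW k) i h).le⟩
      by_cases hTall : S₀ ⊆ T
      · -- all coordinates blow up: contradiction with maximality of lam
        exfalso
        set em : ℝ≥0 := S₀.inf' hS₀ne what with hemdef
        have hem : em ≠ 0 := by
          have hpos : 0 < em := (Finset.lt_inf'_iff hS₀ne).mpr fun i hi =>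
            pos_iff_ne_zero.mpr (hwhat_pos i hi)
          exact hpos.ne'
        have hemv : em • vstar ≤ what := by
          intro i
          by_cases hi : i ∈ S₀
          · calc em * vstar i ≤ em * 1 := mul_le_mul_right (hvle1 i) _
            _ = em := mul_one _
            _ ≤ what i := Finset.inf'_le _ hi
          · show em * vstar i ≤ what i
            rw [hsupp₀ vstar hvW i hi, mul_zero]
            exact zero_le
        set c : ℝ≥0 := em⁻¹ * (2 * Nw) with hcdef
        have hks : ∀ i : Fin n, ∃ k, i ∈ S₀ → c ≤ u k i := by
          intro i
          by_cases hi : i ∈ S₀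
          · have hub : ¬ BddAbove (Set.range fun k => u k i) := (hTmem i).mp (hTall hi)
            obtain ⟨x, ⟨k, rfl⟩, hx⟩ := not_bddAbove_iff.mp hub c
            exact ⟨k, fun _ => hx.le⟩
          · exact ⟨0, fun h => absurd h hi⟩
        choose kf hkf using hks
        set k₀ : ℕ := (Finset.univ.sup kf) + 1 with hk₀def
        have hk₀pos : k₀ ≠ 0 := Nat.succ_ne_zero _
        have huk₀ : ∀ i ∈ S₀, c ≤ u k₀ i := by
          intro i hi
          exact (hkf i hi).trans (humono (le_trans (Finset.le_sup (Finset.mem_univ i))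
            (Nat.le_succ _)) i)
        have hk₀what : (2:ℝ≥0) • what ≤ (maxMul B)^[k₀] what := by
          have h1 : em • u k₀ ≤ (maxMul B)^[k₀] what := by
            calc em • u k₀ = (maxMul B)^[k₀] (em • vstar) := (iter_smul _ _ _).symm
            _ ≤ _ := iter_mono _ hemv
          intro i
          by_cases hi : i ∈ S₀
          · calc (2 * what i : ℝ≥0) ≤ 2 * Nw :=
                mul_le_mul_right (Finset.le_sup (Finset.mem_univ i)) _
            _ = em * c := by rw [hcdef, ← mul_assoc, mul_inv_cancel₀ hem, one_mul]
            _ ≤ em * u k₀ i := mul_le_mul_right (huk₀ i hi) _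
            _ ≤ (maxMul B)^[k₀] what i := h1 i
          · show 2 * what i ≤ _
            rw [hwhat_zero i hi, mul_zero]
            exact zero_le
        set δ : ℝ≥0 := (2:ℝ≥0) ^ ((k₀:ℝ)⁻¹) with hδdef
        have hδ1 : 1 < δ := NNReal.one_lt_rpow (by norm_num) (by positivity)
        have hδ0 : δ ≠ 0 := (zero_lt_one.trans hδ1).ne'
        have hδk : δ ^ k₀ = 2 := by
          rw [hδdef, ← NNReal.rpow_natCast (_ ^ _), ← NNReal.rpow_mul,
            inv_mul_cancel₀ (by exact_mod_cast hk₀pos), NNReal.rpow_one]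
        set z : Fin n → ℝ≥0 :=
          (Finset.range k₀).sup (fun t => (δ⁻¹)^t • (maxMul B)^[t] what) with hzdef
        have hzW : z ∈ W :=
          cone_sup_mem hW _ _ fun t _ => hW.2.2 _ _ (iter_mem hW hBinvW t hwhatW)
        have hwhatz : what ≤ z := by
          have h0 : (0:ℕ) ∈ Finset.range k₀ := Finset.mem_range.mpr (Nat.pos_of_ne_zero hk₀pos)
          have h1 : (δ⁻¹)^0 • (maxMul B)^[0] what ≤ z := by
            rw [hzdef]
            exact Finset.le_sup (f := fun t => (δ⁻¹)^t • (maxMul B)^[t] what) h0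
          rwa [pow_zero, one_smul, Function.iterate_zero_apply] at h1
        have hzbot : maxMul B (⊥ : Fin n → ℝ≥0) = ⊥ := maxMul_zero
        have hFz : maxMul B z =
            (Finset.range k₀).sup (fun t => (δ⁻¹)^t • (maxMul B)^[t+1] what) := by
          rw [hzdef, Finset.comp_sup_eq_sup_comp (maxMul B) (fun x y => maxMul_sup x y) hzbot]
          refine Finset.sup_congr rfl fun t _ => ?_
          show maxMul B ((δ⁻¹)^t • (maxMul B)^[t] what) = (δ⁻¹)^t • (maxMul B)^[t+1] what
          rw [maxMul_smul, Function.iterate_succ_apply']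
        have hδz : δ • z ≤ maxMul B z := by
          have hzs : δ • z =
              (Finset.range k₀).sup (fun t => δ • ((δ⁻¹)^t • (maxMul B)^[t] what)) := by
            rw [hzdef, Finset.comp_sup_eq_sup_comp (fun x => δ • x)
              (fun x y => smul_sup' δ x y) (smul_zero δ)]
            rfl
          rw [hFz, hzs]
          refine Finset.sup_le fun t ht => ?_
          cases t with
          | zero =>
            have hk₁mem : (Finset.univ.sup kf) ∈ Finset.range k₀ :=
              Finset.self_mem_range_succ _
            refine le_trans ?_
              (Finset.le_sup (f := fun t => (δ⁻¹)^t • (maxMul B)^[t+1] what) hk₁mem)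
            have h2 : (δ⁻¹)^(Finset.univ.sup kf) • ((2:ℝ≥0) • what) ≤
                (δ⁻¹)^(Finset.univ.sup kf) • (maxMul B)^[k₀] what := smul_le_smul' _ hk₀what
            calc δ • ((δ⁻¹)^0 • (maxMul B)^[0] what) = δ • what := by simp
            _ = (δ⁻¹)^(Finset.univ.sup kf) • ((2:ℝ≥0) • what) := by
                rw [smul_smul]
                congr 1
                rw [← hδk, hk₀def, pow_succ, inv_pow,
                  inv_mul_cancel_left₀ (pow_ne_zero _ hδ0)]
            _ ≤ (δ⁻¹)^(Finset.univ.sup kf) • (maxMul B)^[k₀] what := h2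
          | succ s =>
            have hsmem : s ∈ Finset.range k₀ :=
              Finset.mem_range.mpr (Nat.lt_of_succ_lt (Finset.mem_range.mp ht))
            refine le_trans (le_of_eq ?_)
              (Finset.le_sup (f := fun t => (δ⁻¹)^t • (maxMul B)^[t+1] what) hsmem)
            rw [smul_smul]
            congr 1
            rw [pow_succ, (show δ * ((δ⁻¹)^s * δ⁻¹) = (δ⁻¹)^s * (δ * δ⁻¹) by ring),
              mul_inv_cancel₀ hδ0, mul_one]
        -- normalize z and contradict maximality
        have hzne : z ≠ 0 := by
          intro h0
          rw [h0] at hwhatz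
          exact hwhatne (le_antisymm hwhatz zero_le)
        set Nz : ℝ≥0 := Finset.univ.sup z with hNzdef
        have hNz : Nz ≠ 0 := nrm_ne_zero hzne
        set zn : Fin n → ℝ≥0 := Nz⁻¹ • z with hzndef
        have hznK : zn ∈ K := by
          refine ⟨hW.2.2 _ _ hzW, ?_⟩
          show Finset.univ.sup (Nz⁻¹ • z) = 1
          rw [nrm_smul, ← hNzdef, inv_mul_cancel₀ hNz]
        have hpair : (δ * lam, zn) ∈ K' := by
          refine ⟨hznK, ?_⟩
          have hmz : maxMul A zn = Nz⁻¹ • (lam • maxMul B z) := by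
            rw [hzndef, maxMul_smul, hAB z]
          rw [hmz]
          have h := smul_le_smul' (Nz⁻¹ * lam) hδz
          rw [smul_smul] at h
          have e1 : (δ * lam) • zn = ((Nz⁻¹ * lam) * δ) • z := by
            rw [hzndef, smul_smul]
            congr 1
            ring
          have e2 : Nz⁻¹ • (lam • maxMul B z) = (Nz⁻¹ * lam) • maxMul B z :=
            smul_smul _ _ _
          rw [e1, e2]
          exact h
        have hle : δ * lam ≤ lam := hmax hpair
        have hδle : δ ≤ 1 := by
          have h2 := mul_le_mul_left hle lam⁻¹
          rwa [mul_assoc, mul_inv_cancel₀ hlam, mul_one] at h2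
        exact absurd hδle (not_le.mpr hδ1)
      · -- some coordinate stays bounded: recurse to a smaller support
        obtain ⟨i₀, hi₀S₀, hi₀T⟩ := Finset.not_subset.mp hTall
        have hNu : ∀ k, Finset.univ.sup (u k) ≠ 0 := by
          intro k
          have h1 : (1:ℝ≥0) ≤ Finset.univ.sup (u k) := by
            rw [← hvN]
            exact nrm_mono (huvstar k)
          exact (lt_of_lt_of_le zero_lt_one h1).ne'
        set zs : ℕ → (Fin n → ℝ≥0) := fun k => (Finset.univ.sup (u k))⁻¹ • u k with hzsdef
        have hzsK : ∀ k, zs k ∈ K := by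
          intro k
          refine ⟨hW.2.2 _ _ (huW k), ?_⟩
          show Finset.univ.sup ((Finset.univ.sup (u k))⁻¹ • u k) = 1
          rw [nrm_smul, inv_mul_cancel₀ (hNu k)]
        obtain ⟨y, hyK, φ, hφ, hconv⟩ := hKcomp.tendsto_subseq hzsK
        obtain ⟨hyW, hyN⟩ := hyK
        have hyne : y ≠ 0 := ne_zero_of_nrm_one hyN
        have hiT' : ¬ BddAbove (Set.range fun k => u k iT) := hiT
        have hy0 : ∀ i, i ∉ T → y i = 0 := by
          intro i hiTn
          have hbdi : BddAbove (Set.range fun k => u k i) :=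
            not_not.mp (fun h => hiTn ((hTmem i).mpr h))
          obtain ⟨M, hM⟩ := hbdi
          have hM' : ∀ k, u k i ≤ M := fun k => hM (Set.mem_range_self k)
          have hci : Tendsto (fun k => zs (φ k) i) atTop (𝓝 (y i)) :=
            ((continuous_apply i).tendsto y).comp hconv
          have key : ∀ ε : ℝ≥0, ε ≠ 0 → y i ≤ ε := by
            intro ε hε
            refine le_of_tendsto hci ?_
            obtain ⟨x, ⟨k₀, rfl⟩, hx⟩ := not_bddAbove_iff.mp hiT' (ε⁻¹ * M)
            refine Filter.eventually_atTop.mpr ⟨k₀, fun k hk => ?_⟩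
            have h1 : ε⁻¹ * M ≤ Finset.univ.sup (u (φ k)) := by
              calc ε⁻¹ * M ≤ u k₀ iT := hx.le
              _ ≤ u (φ k) iT := humono (hk.trans hφ.le_apply) iT
              _ ≤ Finset.univ.sup (u (φ k)) := Finset.le_sup (Finset.mem_univ iT)
            have hN0 : Finset.univ.sup (u (φ k)) ≠ 0 := hNu (φ k)
            have h2 : M ≤ ε * Finset.univ.sup (u (φ k)) := by
              have h3 := mul_le_mul_right h1 ε
              rwa [← mul_assoc, mul_inv_cancel₀ hε, one_mul] at h3
            show (Finset.univ.sup (u (φ k)))⁻¹ * u (φ k) i ≤ ε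
            calc (Finset.univ.sup (u (φ k)))⁻¹ * u (φ k) i
                ≤ (Finset.univ.sup (u (φ k)))⁻¹ * M := mul_le_mul_right (hM' (φ k)) _
            _ ≤ (Finset.univ.sup (u (φ k)))⁻¹ * (ε * Finset.univ.sup (u (φ k))) :=
                mul_le_mul_right h2 _
            _ = ε * ((Finset.univ.sup (u (φ k)))⁻¹ * Finset.univ.sup (u (φ k))) := by ring
            _ = ε := by rw [inv_mul_cancel₀ hN0, mul_one]
          by_contra hne
          have hhalf : y i / 2 ≠ 0 := by
            rw [div_eq_mul_inv]
            exact mul_ne_zero hne (inv_ne_zero two_ne_zero)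
          exact absurd (key (y i / 2) hhalf) (not_le.mpr (NNReal.half_lt_self hne))
        have hedge : ∀ i, i ∉ T → ∀ j, j ∈ T → A i j = 0 := by
          intro i hiTn j hjT
          by_contra hA0
          have hj : ¬ BddAbove (Set.range fun k => u k j) := (hTmem j).mp hjT
          have hc : lam⁻¹ * A i j ≠ 0 := mul_ne_zero (inv_ne_zero hlam) hA0
          apply hiTn
          refine (hTmem i).mpr ?_
          rintro ⟨M, hM⟩
          apply hj
          refine ⟨(lam⁻¹ * A i j)⁻¹ * M, ?_⟩
          rintro x ⟨k, rfl⟩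
          have h1 : lam⁻¹ * A i j * u k j ≤ u (k+1) i := by
            rw [husucc k]
            have h2 : B i j * u k j ≤ maxMul B (u k) i :=
              Finset.le_sup (f := fun j => B i j * u k j) (Finset.mem_univ j)
            have h3 : B i j = lam⁻¹ * A i j := by
              rw [hBdef, Matrix.smul_apply, smul_eq_mul]
            rwa [h3] at h2
          have h2 : u (k+1) i ≤ M := hM (Set.mem_range_self (k+1))
          show u k j ≤ (lam⁻¹ * A i j)⁻¹ * M
          have h4 : u k j = (lam⁻¹ * A i j)⁻¹ * (lam⁻¹ * A i j * u k j) := by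
            rw [← mul_assoc, inv_mul_cancel₀ hc, one_mul]
          rw [h4]
          exact mul_le_mul_right (h1.trans h2) _
        obtain ⟨hW₂, hcl₂, hinv₂⟩ := restricted_props A hW hcl hinv T hedge
        have hssub : T ⊂ S :=
          hS₀S ▸ (HasSubset.Subset.ssubset_of_ne hTsub (fun h => hi₀T (h ▸ hi₀S₀)))
        obtain ⟨u', ⟨hu'W, -⟩, hu'ne, lam', heq⟩ :=
          IH T hssub _ hW₂ hcl₂ ⟨y, ⟨hyW, hy0⟩, hyne⟩ hinv₂ (fun w hw => hw.2)
        exact ⟨u', hu'W, hu'ne, lam', heq⟩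

end Stmt12Aux

theorem stmt12 {n : ℕ} (A : Matrix (Fin n) (Fin n) ℝ≥0) (W : Set (Fin n → ℝ≥0))
    (hW : MaxCone W) (hcl : IsClosed W) (hnz : ∃ w ∈ W, w ≠ 0)
    (hinv : ∀ v ∈ W, maxMul A v ∈ W) :
    ∃ u ∈ W, u ≠ 0 ∧ ∃ lam : ℝ≥0, maxMul A u = lam • u :=
  Stmt12Aux.mainLemma A Finset.univ W hW hcl hnz hinv
    (fun _ _ i hi => absurd (Finset.mem_univ i) hi)
end

section
/- Let W ⊆ (ℝ≥0)ⁿ be a closed max cone with a nonzero vector, invariant under multiplication by a nonnegative matrix A in the ordinary (sum-product) sense: Av ∈ W for all v ∈ W. Then A has an eigenvector in W: there exist nonzero u ∈ W and λ ≥ 0 with Au = λu. (Here W, being a max cone, is in particular a closed cone under scalar multiplication; the statement is the Perron–Frobenius theorem for closed cones applied to W's convex hull, or can be stated for any closed convex cone C ⊆ (ℝ≥0)ⁿ with C ≠ {0}, AC ⊆ C.) -/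
open scoped NNReal ENNReal
open Filter Topology

set_option synthInstance.maxHeartbeats 1000000
set_option maxHeartbeats 1000000

namespace Stmt13Aux

variable {n : ℕ}

noncomputable def sf (v : Fin n → ℝ≥0) : ℝ≥0 := ∑ i, v i

lemma sf_add (v w : Fin n → ℝ≥0) : sf (v + w) = sf v + sf w := by
  simp [sf, Finset.sum_add_distrib]

lemma sf_smul (c : ℝ≥0) (v : Fin n → ℝ≥0) : sf (c • v) = c * sf v := by
  simp [sf, Finset.mul_sum]

lemma sf_eq_zero {v : Fin n → ℝ≥0} (h : sf v = 0) : v = 0 := by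
  funext i
  simpa using (Finset.sum_eq_zero_iff.mp h) i (Finset.mem_univ i)

lemma coord_le_sf (v : Fin n → ℝ≥0) (i : Fin n) : v i ≤ sf v :=
  Finset.single_le_sum (fun _ _ => zero_le) (Finset.mem_univ i)

lemma continuous_sf : Continuous (sf (n := n)) :=
  continuous_finset_sum _ fun i _ => continuous_apply i

lemma continuous_mulVec (A : Matrix (Fin n) (Fin n) ℝ≥0) :
    Continuous (fun v : Fin n → ℝ≥0 => A.mulVec v) := by
  refine continuous_pi fun i => ?_
  simp only [Matrix.mulVec, dotProduct]
  exact continuous_finset_sum _ fun j _ => continuous_const.mul (continuous_apply j)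

noncomputable def sfHom : (Fin n → ℝ≥0) →+ ℝ≥0 where
  toFun := sf
  map_zero' := by simp [sf]
  map_add' := sf_add

noncomputable def mvHom (A : Matrix (Fin n) (Fin n) ℝ≥0) : (Fin n → ℝ≥0) →+ (Fin n → ℝ≥0) where
  toFun v := A.mulVec v
  map_zero' := Matrix.mulVec_zero A
  map_add' v w := Matrix.mulVec_add A v w


lemma extract (C : Set (Fin n → ℝ≥0)) (hcl : IsClosed C)
    (w : ℕ → Fin n → ℝ≥0) (hwC : ∀ j, w j ∈ C) (hws : ∀ j, sf (w j) = 1) :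
    ∃ u, u ∈ C ∧ sf u = 1 ∧ ∃ φ : ℕ → ℕ, StrictMono φ ∧
      Tendsto (fun j => w (φ j)) atTop (𝓝 u) := by
  have hK : IsCompact (Set.univ.pi fun _ : Fin n => Set.Icc (0:ℝ≥0) 1) :=
    isCompact_univ_pi fun _ => isCompact_Icc
  have hmem : ∀ j, w j ∈ (Set.univ.pi fun _ : Fin n => Set.Icc (0:ℝ≥0) 1) := by
    intro j i _
    exact ⟨zero_le, by rw [← hws j]; exact coord_le_sf (w j) i⟩
  obtain ⟨u, -, φ, hφ, hlim⟩ := hK.tendsto_subseq hmem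
  have hlim' : Tendsto (fun j => w (φ j)) atTop (𝓝 u) := hlim
  refine ⟨u, hcl.mem_of_tendsto hlim' (Eventually.of_forall fun j => hwC (φ j)), ?_, φ, hφ, hlim'⟩
  have h1 : Tendsto (fun j => sf (w (φ j))) atTop (𝓝 (sf u)) :=
    (continuous_sf.tendsto u).comp hlim'
  have h2 : Tendsto (fun j => sf (w (φ j))) atTop (𝓝 1) := by
    simp only [hws]; exact tendsto_const_nhds
  exact tendsto_nhds_unique h1 h2

lemma eigen_of_approx (A : Matrix (Fin n) (Fin n) ℝ≥0) (C : Set (Fin n → ℝ≥0))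
    (hcl : IsClosed C) (r : ℝ≥0) (hr : r ≠ 0)
    (w ε : ℕ → Fin n → ℝ≥0) (ρ : ℕ → ℝ≥0)
    (hwC : ∀ j, w j ∈ C) (hws : ∀ j, sf (w j) = 1)
    (hε : Tendsto ε atTop (𝓝 0)) (hρ : Tendsto ρ atTop (𝓝 r))
    (heq : ∀ j, ε j + ρ j • A.mulVec (w j) = w j) :
    ∃ u ∈ C, u ≠ 0 ∧ ∃ lam : ℝ≥0, A.mulVec u = lam • u := by
  obtain ⟨u, huC, hus, φ, hφ, hlim⟩ := extract C hcl w hwC hws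
  have hAu : Tendsto (fun j => A.mulVec (w (φ j))) atTop (𝓝 (A.mulVec u)) :=
    ((continuous_mulVec A).tendsto u).comp hlim
  have hL : Tendsto (fun j => ε (φ j) + ρ (φ j) • A.mulVec (w (φ j))) atTop
      (𝓝 (0 + r • A.mulVec u)) :=
    (hε.comp hφ.tendsto_atTop).add ((hρ.comp hφ.tendsto_atTop).smul hAu)
  have hkey : (0 : Fin n → ℝ≥0) + r • A.mulVec u = u := by
    refine tendsto_nhds_unique ?_ hlim
    simpa only [heq] using hL
  rw [zero_add] at hkey
  refine ⟨u, huC, fun h => by simp [h, sf] at hus, r⁻¹, ?_⟩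
  conv_rhs => rw [← hkey]
  rw [smul_smul, inv_mul_cancel₀ hr, one_smul]

lemma tendsto_zero_of_sf (v : ℕ → Fin n → ℝ≥0) (b : ℕ → ℝ≥0)
    (h : ∀ j, sf (v j) ≤ b j) (hb : Tendsto b atTop (𝓝 0)) :
    Tendsto v atTop (𝓝 0) := by
  rw [tendsto_pi_nhds]
  intro i
  have : Tendsto (fun j => v j i) atTop (𝓝 0) :=
    tendsto_of_tendsto_of_tendsto_of_le_of_le tendsto_const_nhds hb
      (fun j => zero_le) (fun j => (coord_le_sf (v j) i).trans (h j))
  simpa using this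

lemma eigen_of_small (A : Matrix (Fin n) (Fin n) ℝ≥0) (C : Set (Fin n → ℝ≥0))
    (hcl : IsClosed C) (w : ℕ → Fin n → ℝ≥0) (b : ℕ → ℝ≥0)
    (hwC : ∀ j, w j ∈ C) (hws : ∀ j, sf (w j) = 1)
    (hb : Tendsto b atTop (𝓝 0))
    (hsmall : ∀ j, sf (A.mulVec (w j)) ≤ b j) :
    ∃ u ∈ C, u ≠ 0 ∧ ∃ lam : ℝ≥0, A.mulVec u = lam • u := by
  obtain ⟨u, huC, hus, φ, hφ, hlim⟩ := extract C hcl w hwC hws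
  have hAu : Tendsto (fun j => A.mulVec (w (φ j))) atTop (𝓝 (A.mulVec u)) :=
    ((continuous_mulVec A).tendsto u).comp hlim
  have h1 : Tendsto (fun j => sf (A.mulVec (w (φ j)))) atTop (𝓝 (sf (A.mulVec u))) :=
    (continuous_sf.tendsto _).comp hAu
  have h2 : Tendsto (fun j => sf (A.mulVec (w (φ j)))) atTop (𝓝 0) :=
    tendsto_of_tendsto_of_tendsto_of_le_of_le tendsto_const_nhds
      (hb.comp hφ.tendsto_atTop) (fun j => zero_le) (fun j => hsmall (φ j))
  have : A.mulVec u = 0 := sf_eq_zero (tendsto_nhds_unique h1 h2)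
  exact ⟨u, huC, fun h => by simp [h, sf] at hus, 0, by simp [this]⟩


noncomputable def xk (A : Matrix (Fin n) (Fin n) ℝ≥0) (x : Fin n → ℝ≥0) : ℕ → Fin n → ℝ≥0
  | 0 => x
  | (k+1) => A.mulVec (xk A x k)

lemma series_facts (A : Matrix (Fin n) (Fin n) ℝ≥0) (C : Set (Fin n → ℝ≥0))
    (hadd : ∀ x ∈ C, ∀ y ∈ C, x + y ∈ C)
    (hsmul : ∀ r : ℝ≥0, ∀ x ∈ C, r • x ∈ C)
    (hcl : IsClosed C) (hinv : ∀ v ∈ C, A.mulVec v ∈ C)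
    (x : Fin n → ℝ≥0) (hxC : x ∈ C) (β : ℝ≥0)
    (hsum : Summable fun k => sf (xk A x k) * β ^ k) :
    ∃ y, y ∈ C ∧ sf y = ∑' k, sf (xk A x k) * β ^ k ∧ x + β • A.mulVec y = y := by
  classical
  set G : ℕ → Fin n → ℝ≥0 := fun k => β ^ k • xk A x k with hG
  have hxkC : ∀ k, xk A x k ∈ C := by
    intro k
    induction k with
    | zero => exact hxC
    | succ k ih => exact hinv _ ih
  have hGC : ∀ k, G k ∈ C := fun k => hsmul _ _ (hxkC k)
  have hcoord : ∀ i, Summable fun k => G k i := by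
    intro i
    refine NNReal.summable_of_le (fun k => ?_) hsum
    calc G k i = β ^ k * xk A x k i := rfl
    _ ≤ β ^ k * sf (xk A x k) := by
        exact mul_le_mul_right (coord_le_sf _ i) _
    _ = sf (xk A x k) * β ^ k := mul_comm _ _
  set y : Fin n → ℝ≥0 := fun i => ∑' k, G k i with hy
  have hHS : HasSum G y := Pi.hasSum.mpr fun i => (hcoord i).hasSum
  have hyC : y ∈ C := by
    have hPS : ∀ m, (∑ k ∈ Finset.range m, G k) ∈ C := by
      intro m
      induction m with
      | zero => simpa using hsmul 0 x hxC
      | succ m ih => rw [Finset.sum_range_succ]; exact hadd _ ih _ (hGC m)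
    exact hcl.mem_of_tendsto hHS.tendsto_sum_nat (Eventually.of_forall hPS)
  have hsfy : sf y = ∑' k, sf (xk A x k) * β ^ k := by
    have h1 : HasSum (fun k => sf (G k)) (sf y) := hHS.map sfHom continuous_sf
    have h2 : (fun k => sf (G k)) = fun k => sf (xk A x k) * β ^ k := by
      funext k; rw [sf_smul]; exact mul_comm _ _
    rw [h2] at h1
    exact h1.tsum_eq.symm
  have hA : HasSum (fun k => A.mulVec (G k)) (A.mulVec y) :=
    hHS.map (mvHom A) (continuous_mulVec A)
  have hgk : ∀ k, A.mulVec (G k) = β ^ k • xk A x (k + 1) := by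
    intro k
    show A.mulVec (β ^ k • xk A x k) = β ^ k • A.mulVec (xk A x k)
    exact Matrix.mulVec_smul A (β ^ k) (xk A x k)
  rw [funext hgk] at hA
  have hB : HasSum (fun k => G (k + 1)) (β • A.mulVec y) := by
    have h := hA.const_smul β
    have he : (fun k => β • β ^ k • xk A x (k + 1)) = fun k => G (k + 1) := by
      funext k
      rw [smul_smul, ← pow_succ']
    rwa [he] at h
  have hC : HasSum G (G 0 + β • A.mulVec y) := hB.zero_add
  have hid : x + β • A.mulVec y = y := by
    have : G 0 = x := by simp [hG, xk]
    rw [← this]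
    exact hC.unique hHS
  exact ⟨y, hyC, hsfy, hid⟩

end Stmt13Aux

open Stmt13Aux in
theorem stmt13 {n : ℕ} (A : Matrix (Fin n) (Fin n) ℝ≥0) (C : Set (Fin n → ℝ≥0))
    (hadd : ∀ x ∈ C, ∀ y ∈ C, x + y ∈ C)
    (hsmul : ∀ r : ℝ≥0, ∀ x ∈ C, r • x ∈ C)
    (hcl : IsClosed C) (hnz : ∃ x ∈ C, x ≠ 0)
    (hinv : ∀ v ∈ C, A.mulVec v ∈ C) :
    ∃ u ∈ C, u ≠ 0 ∧ ∃ lam : ℝ≥0, A.mulVec u = lam • u := by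
  classical
  obtain ⟨x, hxC, hx0⟩ := hnz
  set a : ℕ → ℝ≥0 := fun k => sf (xk A x k) with ha
  have hxkC : ∀ k, xk A x k ∈ C := by
    intro k
    induction k with
    | zero => exact hxC
    | succ k ih => exact hinv _ ih
  by_cases hzero : ∃ k, a k = 0
  · have hk0 : a (Nat.find hzero) = 0 := Nat.find_spec hzero
    have hkne : Nat.find hzero ≠ 0 := by
      intro h
      rw [h] at hk0
      exact hx0 (sf_eq_zero hk0)
    obtain ⟨m, hm⟩ := Nat.exists_eq_succ_of_ne_zero hkne
    refine ⟨xk A x m, hxkC m, ?_, 0, ?_⟩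
    · intro h
      have hma : a m = 0 := by
        show sf (xk A x m) = 0
        rw [h]
        simp [sf]
      exact Nat.find_min hzero (by omega : m < Nat.find hzero) hma
    · have hz : A.mulVec (xk A x m) = 0 := by
        rw [hm] at hk0
        exact sf_eq_zero hk0
      rw [hz, zero_smul]
  push_neg at hzero
  set S : ℝ≥0 → ℝ≥0∞ := fun β => ∑' k, ((a k * β ^ k : ℝ≥0) : ℝ≥0∞) with hS
  have hSmono : ∀ {β γ : ℝ≥0}, β ≤ γ → S β ≤ S γ := by
    intro β γ h
    exact ENNReal.tsum_le_tsum fun k =>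
      ENNReal.coe_le_coe.mpr (mul_le_mul_right (pow_le_pow_left₀ (zero_le) h k) _)
  set K : ℝ≥0 := (∑ i, ∑ j, A i j) + 1 with hK
  have hKpos : K ≠ 0 := by simp [hK]
  have hsfA : ∀ v, sf (A.mulVec v) ≤ K * sf v := by
    intro v
    have h1 : sf (A.mulVec v) = ∑ i, ∑ j, A i j * v j := by
      simp [sf, Matrix.mulVec, dotProduct]
    rw [h1]
    calc ∑ i, ∑ j, A i j * v j ≤ ∑ i, ∑ j, A i j * sf v :=
          Finset.sum_le_sum fun i _ => Finset.sum_le_sum fun j _ =>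
            mul_le_mul_right (coord_le_sf v j) _
    _ = (∑ i, ∑ j, A i j) * sf v := by simp_rw [← Finset.sum_mul]
    _ ≤ K * sf v := mul_le_mul_left (self_le_add_right _ _) _
  have hak : ∀ k, a k ≤ K ^ k * a 0 := by
    intro k
    induction k with
    | zero => simp
    | succ k ih =>
      calc a (k + 1) ≤ K * a k := hsfA (xk A x k)
      _ ≤ K * (K ^ k * a 0) := mul_le_mul_right ih K
      _ = K ^ (k + 1) * a 0 := by ring
  have hKhalf : K * (2 * K)⁻¹ = 2⁻¹ := by
    rw [mul_inv, mul_comm (2 : ℝ≥0)⁻¹ _, ← mul_assoc, mul_inv_cancel₀ hKpos, one_mul]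
  have hShalf : S ((2 * K)⁻¹) ≠ ⊤ := by
    rw [hS]
    rw [ENNReal.tsum_coe_ne_top_iff_summable]
    refine NNReal.summable_of_le (fun k => ?_)
      ((NNReal.summable_geometric (r := 2⁻¹) two_inv_lt_one).mul_left (a 0))
    calc a k * ((2 * K)⁻¹) ^ k ≤ (K ^ k * a 0) * ((2 * K)⁻¹) ^ k :=
          mul_le_mul_left (hak k) _
    _ = a 0 * (K * (2 * K)⁻¹) ^ k := by rw [mul_pow, mul_comm (K ^ k) (a 0), mul_assoc]
    _ = a 0 * (2⁻¹ : ℝ≥0) ^ k := by rw [hKhalf]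
  have hbinv : Tendsto (fun m : ℕ => ((m : ℝ≥0) + 1)⁻¹) atTop (𝓝 0) := by
    rw [← NNReal.tendsto_coe]
    have : ∀ m : ℕ, ((((m : ℝ≥0) + 1)⁻¹ : ℝ≥0) : ℝ) = 1 / ((m : ℝ) + 1) := by
      intro m; rw [NNReal.coe_inv]; push_cast; rw [one_div]
    simp only [this]
    exact tendsto_one_div_add_atTop_nhds_zero_nat
  by_cases hBig : ∃ β, S β = ⊤
  · obtain ⟨β₀, hβ₀⟩ := hBig
    set r : ℝ≥0 := sInf {β : ℝ≥0 | S β = ⊤} with hr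
    have hrlb : (2 * K)⁻¹ ≤ r := by
      refine le_csInf ⟨β₀, hβ₀⟩ fun γ hγ => ?_
      by_contra h
      push_neg at h
      exact hShalf (top_le_iff.mp ((Set.mem_setOf_eq ▸ hγ) ▸ hSmono h.le))
    have hrpos : r ≠ 0 := by
      intro h
      rw [h, le_zero_iff] at hrlb
      exact (inv_ne_zero (mul_ne_zero two_ne_zero hKpos)) hrlb
    have hrpos' : 0 < r := zero_lt_iff.mpr hrpos
    have hfin_lt : ∀ β : ℝ≥0, β < r → S β ≠ ⊤ := by
      intro β hβ hTop
      have hle : r ≤ β := csInf_le (OrderBot.bddBelow _)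
        (show β ∈ {β : ℝ≥0 | S β = ⊤} from hTop)
      exact absurd hle (not_le.mpr hβ)
    have htop_gt : ∀ β : ℝ≥0, r < β → S β = ⊤ := by
      intro β hβ
      obtain ⟨γ, hγR, hγβ⟩ := (csInf_lt_iff (OrderBot.bddBelow _) ⟨β₀, hβ₀⟩).mp hβ
      exact top_le_iff.mp ((Set.mem_setOf_eq ▸ hγR) ▸ hSmono hγβ.le)
    by_cases hSr : S r = ⊤
    · obtain ⟨γ, hγmono, hγmem, hγlim⟩ := exists_seq_strictMono_tendsto' hrpos'
      have hγfin : ∀ j, Summable fun k => a k * (γ j) ^ k := fun j =>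
        ENNReal.tsum_coe_ne_top_iff_summable.mp (hfin_lt _ (hγmem j).2)
      have hfacts := fun j => series_facts A C hadd hsmul hcl hinv x hxC (γ j) (hγfin j)
      choose y hyC hysf hyid using hfacts
      have hub : ∀ M : ℝ≥0, ∃ j, M < sf (y j) := by
        intro M
        have h1 : (M : ℝ≥0∞) < S r := by rw [hSr]; exact ENNReal.coe_lt_top
        rw [show S r = ∑' k, ((a k * r ^ k : ℝ≥0) : ℝ≥0∞) from rfl,
          ENNReal.tsum_eq_iSup_sum] at h1
        obtain ⟨F, hF⟩ := lt_iSup_iff.mp h1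
        rw [← ENNReal.coe_finset_sum, ENNReal.coe_lt_coe] at hF
        have hcont : Continuous fun β : ℝ≥0 => ∑ k ∈ F, a k * β ^ k :=
          continuous_finset_sum _ fun k _ => continuous_const.mul (continuous_pow k)
        have htl : Tendsto (fun j => ∑ k ∈ F, a k * (γ j) ^ k) atTop
            (𝓝 (∑ k ∈ F, a k * r ^ k)) := (hcont.tendsto r).comp hγlim
        obtain ⟨j, hj⟩ := (htl.eventually (eventually_gt_nhds hF)).exists
        refine ⟨j, lt_of_lt_of_le hj ?_⟩
        rw [hysf j]
        exact Summable.sum_le_tsum F (fun k _ => zero_le) (hγfin j)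
      have hymono : Monotone fun j => sf (y j) := by
        intro j j' hjj
        show sf (y j) ≤ sf (y j')
        rw [hysf j, hysf j']
        exact Summable.tsum_le_tsum (fun k => mul_le_mul_right
          (pow_le_pow_left₀ (zero_le) (hγmono.monotone hjj) k) _) (hγfin j) (hγfin j')
      have hsy_atTop : Tendsto (fun j => sf (y j)) atTop atTop :=
        tendsto_atTop_atTop_of_monotone hymono fun M => (hub M).imp fun j hj => hj.le
      have hinvlim : Tendsto (fun j => (sf (y j))⁻¹) atTop (𝓝 0) := by
        rw [← NNReal.tendsto_coe]
        have h2 : Tendsto (fun j => ((sf (y j) : ℝ))) atTop atTop :=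
          NNReal.tendsto_coe_atTop.mpr hsy_atTop
        simpa [NNReal.coe_inv, Pi.inv_def] using h2.inv_tendsto_atTop
      have hyne : ∀ j, sf (y j) ≠ 0 := by
        intro j h
        refine hzero 0 (le_antisymm ?_ (zero_le))
        have h0 : a 0 ≤ sf (y j) := by
          rw [hysf j]
          simpa using Summable.le_tsum' (hγfin j) 0
        rw [h] at h0
        exact h0
      set w : ℕ → Fin n → ℝ≥0 := fun j => (sf (y j))⁻¹ • y j with hw
      set ε : ℕ → Fin n → ℝ≥0 := fun j => (sf (y j))⁻¹ • x with hεd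
      have hwC : ∀ j, w j ∈ C := fun j => hsmul _ _ (hyC j)
      have hws : ∀ j, sf (w j) = 1 := by
        intro j
        show sf ((sf (y j))⁻¹ • y j) = 1
        rw [sf_smul, inv_mul_cancel₀ (hyne j)]
      have heq : ∀ j, ε j + γ j • A.mulVec (w j) = w j := by
        intro j
        show (sf (y j))⁻¹ • x + γ j • A.mulVec ((sf (y j))⁻¹ • y j) = (sf (y j))⁻¹ • y j
        rw [Matrix.mulVec_smul, smul_comm (γ j), ← smul_add, hyid j]
      have hε : Tendsto ε atTop (𝓝 0) := by
        have := hinvlim.smul_const x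
        rwa [zero_smul] at this
      exact eigen_of_approx A C hcl r hrpos w ε γ hwC hws hε hγlim heq
    · have hsummr : Summable fun k => a k * r ^ k :=
        ENNReal.tsum_coe_ne_top_iff_summable.mp hSr
      obtain ⟨y, hyC, hysf, hyid⟩ := series_facts A C hadd hsmul hcl hinv x hxC r hsummr
      set T : ℕ → ℝ≥0 := fun k => sf (xk A y k) with hT
      have hIk : ∀ k, xk A x k + r • xk A y (k + 1) = xk A y k := by
        intro k
        induction k with
        | zero => exact hyid
        | succ k ih =>
          have h2 := congrArg A.mulVec ih
          rw [Matrix.mulVec_add, Matrix.mulVec_smul] at h2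
          exact h2
      have hTk : ∀ k, a k + r * T (k + 1) = T k := by
        intro k
        have h2 := congrArg sf (hIk k)
        rwa [sf_add, sf_smul] at h2
      have haT : ∀ k, a k ≤ T k := fun k => (hTk k) ▸ le_self_add
      have hTne : ∀ k, T k ≠ 0 := fun k h =>
        hzero k (le_antisymm (h ▸ haT k) (zero_le))
      have hclaim : ∀ δ : ℝ≥0, 0 < δ → δ < 1 → ∃ k, a k ≤ δ * T k := by
        intro δ hδ0 hδ1
        by_contra hcon
        push_neg at hcon
        set q : ℝ≥0 := (1 - δ) / r with hq
        have hstep : ∀ k, T (k + 1) ≤ q * T k := by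
          intro k
          have h1 : δ * T k + r * T (k + 1) ≤ T k := by
            calc δ * T k + r * T (k + 1) ≤ a k + r * T (k + 1) :=
                  add_le_add_left (hcon k).le _
            _ = T k := hTk k
          have h2 : r * T (k + 1) ≤ T k - δ * T k := le_tsub_of_add_le_left h1
          have h3 : T k - δ * T k = (1 - δ) * T k := by rw [tsub_mul, one_mul]
          rw [h3] at h2
          rw [hq, div_mul_eq_mul_div, le_div_iff₀ hrpos']
          rwa [mul_comm]
        have hTq : ∀ m, T m ≤ T 0 * q ^ m := by
          intro m
          induction m with
          | zero => simp
          | succ m ih =>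
            calc T (m + 1) ≤ q * T m := hstep m
            _ ≤ q * (T 0 * q ^ m) := mul_le_mul_right ih q
            _ = T 0 * q ^ (m + 1) := by ring
        have hδle : δ ≤ 1 := hδ1.le
        have hhalf : δ / 2 < δ := NNReal.half_lt_self hδ0.ne'
        have h2pos : (0 : ℝ≥0) < 1 - δ / 2 := tsub_pos_iff_lt.mpr (hhalf.trans_le hδle)
        have h2lt1 : (1 : ℝ≥0) - δ / 2 < 1 := tsub_lt_self one_pos (by positivity)
        set β : ℝ≥0 := r / (1 - δ / 2) with hβ
        have hrβ : r < β := by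
          rw [hβ, lt_div_iff₀ h2pos]
          exact mul_lt_of_lt_one_right hrpos' h2lt1
        have hqβ : q * β < 1 := by
          have hqβ' : q * β = (1 - δ) / (1 - δ / 2) := by
            rw [hq, hβ, div_mul_div_comm, mul_comm (1 - δ) r, mul_div_mul_left _ _ hrpos]
          rw [hqβ', div_lt_one h2pos]
          rw [← NNReal.coe_lt_coe, NNReal.coe_sub hδle, NNReal.coe_sub
            ((NNReal.half_le_self _).trans hδle)]
          have : (0 : ℝ) < δ := hδ0
          have hh : ((δ / 2 : ℝ≥0) : ℝ) = (δ : ℝ) / 2 := by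
            rw [NNReal.coe_div]; norm_num
          rw [hh]
          linarith
        have hfin : S β ≠ ⊤ := by
          rw [show S β = ∑' k, ((a k * β ^ k : ℝ≥0) : ℝ≥0∞) from rfl,
            ENNReal.tsum_coe_ne_top_iff_summable]
          refine NNReal.summable_of_le (fun k => ?_)
            ((NNReal.summable_geometric hqβ).mul_left (T 0))
          calc a k * β ^ k ≤ (T 0 * q ^ k) * β ^ k :=
                mul_le_mul_left ((haT k).trans (hTq k)) _
          _ = T 0 * (q * β) ^ k := by rw [mul_pow, mul_assoc]
        exact hfin (htop_gt β hrβ)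
      have hδj : ∀ j : ℕ, ∃ k, a k ≤ ((j : ℝ≥0) + 2)⁻¹ * T k := by
        intro j
        refine hclaim _ (by positivity) ?_
        exact inv_lt_one_of_one_lt₀ (by
          have : (1 : ℝ≥0) < 2 := one_lt_two
          exact lt_of_lt_of_le this le_add_self)
      choose kj hkj using hδj
      have hxkyC : ∀ k, xk A y k ∈ C := by
        intro k
        induction k with
        | zero => exact hyC
        | succ k ih => exact hinv _ ih
      set w : ℕ → Fin n → ℝ≥0 := fun j => (T (kj j))⁻¹ • xk A y (kj j) with hw
      set ε : ℕ → Fin n → ℝ≥0 := fun j => (T (kj j))⁻¹ • xk A x (kj j) with hεd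
      have hwC : ∀ j, w j ∈ C := fun j => hsmul _ _ (hxkyC _)
      have hws : ∀ j, sf (w j) = 1 := by
        intro j
        show sf ((T (kj j))⁻¹ • xk A y (kj j)) = 1
        rw [sf_smul, inv_mul_cancel₀ (hTne _)]
      have hsfε : ∀ j, sf (ε j) ≤ ((j : ℝ≥0) + 2)⁻¹ := by
        intro j
        show sf ((T (kj j))⁻¹ • xk A x (kj j)) ≤ _
        rw [sf_smul]
        calc (T (kj j))⁻¹ * a (kj j)
            ≤ (T (kj j))⁻¹ * (((j : ℝ≥0) + 2)⁻¹ * T (kj j)) := mul_le_mul_right (hkj j) _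
        _ = ((j : ℝ≥0) + 2)⁻¹ * ((T (kj j))⁻¹ * T (kj j)) := by ring
        _ = ((j : ℝ≥0) + 2)⁻¹ := by rw [inv_mul_cancel₀ (hTne _), mul_one]
      have hbinv2 : Tendsto (fun j : ℕ => ((j : ℝ≥0) + 2)⁻¹) atTop (𝓝 0) := by
        rw [← NNReal.tendsto_coe]
        have h2 : Tendsto (fun j : ℕ => ((j : ℝ) + 2)) atTop atTop := by
          exact tendsto_atTop_add_const_right _ _ tendsto_natCast_atTop_atTop
        have h3 := h2.inv_tendsto_atTop
        refine h3.congr fun j => ?_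
        rw [NNReal.coe_inv]
        norm_num
      have hεlim : Tendsto ε atTop (𝓝 0) := tendsto_zero_of_sf ε _ hsfε hbinv2
      have heq : ∀ j, ε j + r • A.mulVec (w j) = w j := by
        intro j
        show (T (kj j))⁻¹ • xk A x (kj j)
            + r • A.mulVec ((T (kj j))⁻¹ • xk A y (kj j)) = (T (kj j))⁻¹ • xk A y (kj j)
        rw [Matrix.mulVec_smul, smul_comm r, ← smul_add]
        exact congrArg _ (hIk (kj j))
      exact eigen_of_approx A C hcl r hrpos w ε (fun _ => r) hwC hws hεlim
        tendsto_const_nhds heq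
  · push_neg at hBig
    have hsumm : ∀ β : ℝ≥0, Summable fun k => a k * β ^ k := fun β =>
      ENNReal.tsum_coe_ne_top_iff_summable.mp (hBig β)
    have hfacts := fun m : ℕ =>
      series_facts A C hadd hsmul hcl hinv x hxC ((m : ℝ≥0) + 1) (hsumm _)
    choose y hyC hysf hyid using hfacts
    have hy0 : ∀ m, a 0 ≤ sf (y m) := by
      intro m
      rw [hysf m]
      simpa using Summable.le_tsum' (hsumm ((m : ℝ≥0) + 1)) 0
    have hyne : ∀ m, sf (y m) ≠ 0 := fun m h =>
      hzero 0 (le_antisymm (h ▸ hy0 m) (zero_le))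
    set w : ℕ → Fin n → ℝ≥0 := fun m => (sf (y m))⁻¹ • y m with hw
    have hwC : ∀ m, w m ∈ C := fun m => hsmul _ _ (hyC m)
    have hws : ∀ m, sf (w m) = 1 := by
      intro m
      show sf ((sf (y m))⁻¹ • y m) = 1
      rw [sf_smul, inv_mul_cancel₀ (hyne m)]
    have hsmall : ∀ m, sf (A.mulVec (w m)) ≤ ((m : ℝ≥0) + 1)⁻¹ := by
      intro m
      have h1 := congrArg sf (hyid m)
      rw [sf_add, sf_smul] at h1
      have h2 : ((m : ℝ≥0) + 1) * sf (A.mulVec (y m)) ≤ sf (y m) := h1 ▸ le_add_self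
      have h3 : sf (A.mulVec (y m)) ≤ ((m : ℝ≥0) + 1)⁻¹ * sf (y m) := by
        have h4 : sf (A.mulVec (y m)) =
            ((m : ℝ≥0) + 1)⁻¹ * (((m : ℝ≥0) + 1) * sf (A.mulVec (y m))) := by
          rw [← mul_assoc, inv_mul_cancel₀ (by positivity), one_mul]
        rw [h4]
        exact mul_le_mul_right h2 _
      show sf (A.mulVec ((sf (y m))⁻¹ • y m)) ≤ ((m : ℝ≥0) + 1)⁻¹
      rw [Matrix.mulVec_smul, sf_smul]
      calc (sf (y m))⁻¹ * sf (A.mulVec (y m))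
          ≤ (sf (y m))⁻¹ * (((m : ℝ≥0) + 1)⁻¹ * sf (y m)) := mul_le_mul_right h3 _
      _ = ((m : ℝ≥0) + 1)⁻¹ * ((sf (y m))⁻¹ * sf (y m)) := by ring
      _ = ((m : ℝ≥0) + 1)⁻¹ := by rw [inv_mul_cancel₀ (hyne m), mul_one]
    exact eigen_of_small A C hcl w _ hwC hws hbinv hsmall
end
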